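/- Fix a continuous, unitarily invariant, convex function f on states of n qudits, and a mixed qudit state Q with spectral decomposition Q = Σ_i λ_i(Q)|q_i⟩⟨q_i| of rank at least 2. Define ε = λ_1(Q) − λ_2(Q) and Q̃ = (1−ε)^{-1}(λ_2(Q)(|q_1⟩⟨q_1| + |q_2⟩⟨q_2|) + Σ_{i≥3} λ_i(Q)|q_i⟩⟨q_i|). If for all probability measures μ̃ on 2^{[n]} the function f(Σ_I μ̃_I ρ_I ⊗ Q̃^{⊗I^c}) is maximized over state tuples at (|q_1⟩⟨q_1|^{⊗I})_I, then for all probability measures μ, f(Σ_I μ_I ρ_I ⊗ Q^{⊗I^c}) is also maximized at (|q_1⟩⟨q_1|^{⊗I})_I. -/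

import Mathlib

open Finset Matrix
open scoped Kronecker ComplexOrder

/-- `x` majorizes `y`: every subset-sum of `y` is dominated by some subset-sum of `x`
of the same cardinality (equivalently, all top-`k` partial sums of the non-increasing
rearrangements dominate), and the total sums agree. -/
def Majorizes {ι κ : Type*} [Fintype ι] [Fintype κ] (x : ι → ℝ) (y : κ → ℝ) : Prop :=
  (∀ t : Finset κ, ∃ s : Finset ι, s.card = t.card ∧ ∑ j ∈ t, y j ≤ ∑ i ∈ s, x i) ∧
    ∑ j, y j = ∑ i, x i
/-- The outer product `|v⟩⟨v|`. -/
noncomputable def outer {m : Type*} (v : m → ℂ) : Matrix m m ℂ :=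
  Matrix.of fun x y => v x * star (v y)

/-- `ρ_I ⊗ Q^{⊗ I^c}` as an operator on `n` qudits of local dimension `d`. -/
noncomputable def embed {n d : ℕ} (I : Finset (Fin n))
    (ρ : Matrix (↥I → Fin d) (↥I → Fin d) ℂ) (Q : Matrix (Fin d) (Fin d) ℂ) :
    Matrix (Fin n → Fin d) (Fin n → Fin d) ℂ :=
  Matrix.of fun x y =>
    ρ (fun i => x i.1) (fun i => y i.1) * ∏ j ∈ Iᶜ, Q (x j) (y j)

/-- The alignment operator `Σ_{I ⊆ [n]} μ_I ρ_I ⊗ Q^{⊗ I^c}`. -/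
noncomputable def alignOp {n d : ℕ} (μ : Finset (Fin n) → ℝ)
    (ρ : (I : Finset (Fin n)) → Matrix (↥I → Fin d) (↥I → Fin d) ℂ)
    (Q : Matrix (Fin d) (Fin d) ℂ) :
    Matrix (Fin n → Fin d) (Fin n → Fin d) ℂ :=
  ∑ I : Finset (Fin n), μ I • embed I (ρ I) Q

/-- `|v⟩^{⊗ I}` as a vector on the qudits in `I`. -/
noncomputable def prodVec {n d : ℕ} (I : Finset (Fin n)) (v : Fin d → ℂ) :
    (↥I → Fin d) → ℂ :=
  fun x => ∏ i, v (x i)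

/-- A quantum state: positive semi-definite with unit trace. -/
def IsState {m : Type*} [Fintype m] [DecidableEq m] (M : Matrix m m ℂ) : Prop :=
  M.PosSemidef ∧ M.trace = 1

/-- `q` is an orthonormal family of vectors. -/
def OrthonormalFam {d : ℕ} (q : Fin d → Fin d → ℂ) : Prop :=
  ∀ i j, (∑ k, star (q i k) * q j k) = if i = j then (1 : ℂ) else 0

section Aux
variable {n d : ℕ} [NeZero d]

noncomputable def tot (K : Finset (Fin n)) (a : ↥K → Fin d) : Fin n → Fin d :=
  fun j => if h : j ∈ K then a ⟨j, h⟩ else 0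

lemma tot_coe (K : Finset (Fin n)) (a : ↥K → Fin d) (k : ↥K) : tot K a k = a k := by
  simp [tot]

noncomputable def extP (I K : Finset (Fin n))
    (ρ : Matrix (↥I → Fin d) (↥I → Fin d) ℂ) (v : Fin d → ℂ) :
    Matrix (↥K → Fin d) (↥K → Fin d) ℂ :=
  Matrix.of fun a b => ρ (fun i => tot K a i) (fun i => tot K b i) *
    ∏ j ∈ K \ I, (v (tot K a j) * star (v (tot K b j)))

noncomputable def splitEquiv (I K : Finset (Fin n)) (hIK : I ⊆ K) :
    (↥K → Fin d) ≃ (↥I → Fin d) × (↥(K \ I) → Fin d) where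
  toFun a := (fun i => tot K a i, fun j => tot K a j)
  invFun p := fun k => if h : (k : Fin n) ∈ I then p.1 ⟨k, h⟩
    else p.2 ⟨k, Finset.mem_sdiff.mpr ⟨k.2, h⟩⟩
  left_inv a := by
    funext k
    by_cases h : (k : Fin n) ∈ I <;> simp [h, tot, k.2]
  right_inv p := by
    ext j
    · have hj : (j : Fin n) ∈ K := hIK j.2
      simp [tot, hj, j.2]
    · have hj : (j : Fin n) ∈ K := (Finset.mem_sdiff.mp j.2).1
      have hj' : (j : Fin n) ∉ I := (Finset.mem_sdiff.mp j.2).2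
      simp [tot, hj, hj']

lemma tot_symm_mem_I (I K : Finset (Fin n)) (hIK : I ⊆ K)
    (p : (↥I → Fin d) × (↥(K \ I) → Fin d)) (j : Fin n) (hj : j ∈ I) :
    tot K ((splitEquiv I K hIK).symm p) j = p.1 ⟨j, hj⟩ := by
  simp [tot, splitEquiv, hIK hj, hj]

lemma tot_symm_mem_J (I K : Finset (Fin n)) (hIK : I ⊆ K)
    (p : (↥I → Fin d) × (↥(K \ I) → Fin d)) (j : Fin n) (hj : j ∈ K \ I) :
    tot K ((splitEquiv I K hIK).symm p) j = p.2 ⟨j, hj⟩ := by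
  simp [tot, splitEquiv, (Finset.mem_sdiff.mp hj).1, (Finset.mem_sdiff.mp hj).2]

lemma restrict_symm (I K : Finset (Fin n)) (hIK : I ⊆ K)
    (p : (↥I → Fin d) × (↥(K \ I) → Fin d)) :
    (fun i : ↥I => tot K ((splitEquiv I K hIK).symm p) i) = p.1 := by
  funext i; exact tot_symm_mem_I I K hIK p i i.2

lemma prod_symm_J (I K : Finset (Fin n)) (hIK : I ⊆ K)
    (p : (↥I → Fin d) × (↥(K \ I) → Fin d)) (g : Fin d → ℂ) :
    ∏ j ∈ K \ I, g (tot K ((splitEquiv I K hIK).symm p) j) = ∏ j : ↥(K \ I), g (p.2 j) := by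
  rw [Finset.univ_eq_attach, ← Finset.prod_attach (K \ I) (fun j => g (tot K ((splitEquiv I K hIK).symm p) j))]
  exact Finset.prod_congr rfl fun j _ => by rw [tot_symm_mem_J I K hIK p j.1 j.2]

lemma sum_split (I K : Finset (Fin n)) (hIK : I ⊆ K) (F : (↥K → Fin d) → ℂ) :
    ∑ a, F a = ∑ b : ↥I → Fin d, ∑ c : ↥(K \ I) → Fin d,
      F ((splitEquiv I K hIK).symm (b, c)) := by
  rw [← Equiv.sum_comp (splitEquiv I K hIK).symm F, Fintype.sum_prod_type]

lemma trace_extP (I K : Finset (Fin n)) (hIK : I ⊆ K)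
    (ρ : Matrix (↥I → Fin d) (↥I → Fin d) ℂ) (v : Fin d → ℂ)
    (hv : ∑ x, v x * star (v x) = 1) :
    (extP I K ρ v).trace = ρ.trace := by
  rw [Matrix.trace, Matrix.trace]
  simp only [Matrix.diag]
  rw [sum_split I K hIK]
  have : ∀ b c, extP I K ρ v ((splitEquiv I K hIK).symm (b, c)) ((splitEquiv I K hIK).symm (b, c))
      = ρ b b * ∏ j : ↥(K \ I), (v (c j) * star (v (c j))) := by
    intro b c
    rw [extP, Matrix.of_apply, restrict_symm,
      prod_symm_J I K hIK (b, c) (fun x => v x * star (v x))]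
  simp only [this]
  rw [← Finset.sum_mul_sum]
  have h2 : ∑ c : ↥(K \ I) → Fin d, ∏ j : ↥(K \ I), (v (c j) * star (v (c j))) = 1 := by
    rw [← Fintype.piFinset_univ,
      Finset.sum_prod_piFinset univ (fun (_ : ↥(K \ I)) (y : Fin d) => v y * star (v y))]
    rw [Finset.prod_congr rfl fun (_ : ↥(K \ I)) _ => hv, Finset.prod_const_one]
  rw [h2, mul_one]

lemma posSemidef_extP (I K : Finset (Fin n)) (hIK : I ⊆ K)
    (ρ : Matrix (↥I → Fin d) (↥I → Fin d) ℂ) (hρ : ρ.PosSemidef) (v : Fin d → ℂ) :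
    (extP I K ρ v).PosSemidef := by
  rw [Matrix.posSemidef_iff_dotProduct_mulVec]
  constructor
  · ext a b
    simp only [conjTranspose_apply, extP, Matrix.of_apply, star_mul', star_prod, star_star]
    rw [hρ.1.apply]
    congr 1
    exact Finset.prod_congr rfl fun j _ => by ring
  · intro x
    set e := splitEquiv (d := d) I K hIK with he
    set g : (↥I → Fin d) → ℂ := fun β => ∑ c : ↥(K \ I) → Fin d,
      x (e.symm (β, c)) * ∏ j : ↥(K \ I), star (v ((β, c).2 j)) with hg
    have hterm : ∀ (β₁ β₂ : ↥I → Fin d) (c₁ c₂ : ↥(K \ I) → Fin d),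
        extP I K ρ v (e.symm (β₁, c₁)) (e.symm (β₂, c₂))
          = ρ β₁ β₂ * ((∏ j : ↥(K \ I), v (c₁ j)) * ∏ j : ↥(K \ I), star (v (c₂ j))) := by
      intro β₁ β₂ c₁ c₂
      rw [extP, Matrix.of_apply, restrict_symm, restrict_symm, Finset.prod_mul_distrib,
        prod_symm_J I K hIK (β₁, c₁) v, prod_symm_J I K hIK (β₂, c₂) (fun y => star (v y))]
    have key : star x ⬝ᵥ (extP I K ρ v *ᵥ x) = star g ⬝ᵥ (ρ *ᵥ g) := by
      simp only [dotProduct, mulVec, Pi.star_apply]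
      rw [sum_split I K hIK]
      trans (∑ β₁ : ↥I → Fin d, ∑ c₁ : ↥(K \ I) → Fin d,
        star (x (e.symm (β₁, c₁))) * ∑ β₂ : ↥I → Fin d, ∑ c₂ : ↥(K \ I) → Fin d,
          (ρ β₁ β₂ * ((∏ j : ↥(K \ I), v (c₁ j)) * ∏ j : ↥(K \ I), star (v (c₂ j)))) *
            x (e.symm (β₂, c₂)))
      · refine Finset.sum_congr rfl fun β₁ _ => Finset.sum_congr rfl fun c₁ _ => ?_
        refine congrArg _ ?_
        rw [sum_split I K hIK (fun b => extP I K ρ v ((splitEquiv I K hIK).symm (β₁, c₁)) b * x b)]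
        exact Finset.sum_congr rfl fun β₂ _ => Finset.sum_congr rfl fun c₂ _ => by
          rw [hterm]
      · simp only [hg, star_sum, star_mul', star_prod, star_star, Finset.mul_sum,
          Finset.sum_mul]
        refine Finset.sum_congr rfl fun β₁ _ => ?_
        rw [Finset.sum_comm]
        refine Finset.sum_congr rfl fun β₂ _ => ?_
        rw [Finset.sum_comm]
        exact Finset.sum_congr rfl fun c₂ _ => Finset.sum_congr rfl fun c₁ _ => by ring
    rw [key]
    exact hρ.dotProduct_mulVec_nonneg g

lemma posSemidef_smul_real {m : Type*} [Fintype m] [DecidableEq m]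
    {M : Matrix m m ℂ} (h : M.PosSemidef) {c : ℝ} (hc : 0 ≤ c) : (c • M).PosSemidef := by
  rw [Matrix.posSemidef_iff_dotProduct_mulVec]
  constructor
  · ext a b
    simp only [conjTranspose_apply, Matrix.smul_apply, star_smul, star_trivial]
    rw [h.1.apply]
  · intro x
    have : star x ⬝ᵥ ((c • M) *ᵥ x) = c • (star x ⬝ᵥ (M *ᵥ x)) := by
      rw [Matrix.smul_mulVec, dotProduct_smul]
    rw [this]
    have h2 := h.dotProduct_mulVec_nonneg x
    rw [Complex.real_smul]
    have : (0:ℂ) ≤ (c:ℂ) := by exact_mod_cast Complex.zero_le_real.mpr hc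
    exact mul_nonneg this h2

lemma posSemidef_sum {m : Type*} [Fintype m] [DecidableEq m] {α : Type*} (s : Finset α)
    (f : α → Matrix m m ℂ) (h : ∀ i ∈ s, (f i).PosSemidef) : (∑ i ∈ s, f i).PosSemidef := by
  classical
  induction s using Finset.induction with
  | empty => simpa using Matrix.PosSemidef.zero
  | insert _ _ hx ih =>
    rename_i a s
    rw [Finset.sum_insert hx]
    exact (h a (Finset.mem_insert_self a s)).add
      (ih fun i hi => h i (Finset.mem_insert_of_mem hi))

lemma posSemidef_outer {m : Type*} [Fintype m] [DecidableEq m] (v : m → ℂ) :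
    (outer v).PosSemidef := by
  rw [Matrix.posSemidef_iff_dotProduct_mulVec]
  constructor
  · ext a b
    simp only [conjTranspose_apply, outer, Matrix.of_apply, star_mul', star_star]
    ring
  · intro x
    have : star x ⬝ᵥ (outer v *ᵥ x)
        = star (∑ b, star (v b) * x b) * (∑ b, star (v b) * x b) := by
      simp only [dotProduct, mulVec, outer, Matrix.of_apply, Pi.star_apply, star_sum, star_mul',
        star_star, Finset.mul_sum, Finset.sum_mul]
      rw [Finset.sum_comm]
      exact Finset.sum_congr rfl fun a _ => Finset.sum_congr rfl fun b _ => by ring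
    rw [this]
    exact star_mul_self_nonneg _

lemma prod_split_tot (I K : Finset (Fin n)) (hIK : I ⊆ K) (g : Fin d → ℂ) (a : ↥K → Fin d) :
    ∏ k : ↥K, g (a k) = (∏ i ∈ I, g (tot K a i)) * ∏ j ∈ K \ I, g (tot K a j) := by
  calc ∏ k : ↥K, g (a k) = ∏ k ∈ K.attach, g (tot K a k.1) :=
        Finset.prod_congr (Finset.univ_eq_attach K) fun k _ => by rw [tot_coe]
    _ = ∏ k ∈ K, g (tot K a k) := Finset.prod_attach K (fun k => g (tot K a k))
    _ = (∏ j ∈ K \ I, g (tot K a j)) * ∏ i ∈ I, g (tot K a i) := (Finset.prod_sdiff hIK).symm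
    _ = (∏ i ∈ I, g (tot K a i)) * ∏ j ∈ K \ I, g (tot K a j) := mul_comm _ _

lemma prod_subtype_tot (I K : Finset (Fin n)) (hIK : I ⊆ K) (g : Fin d → ℂ) (a : ↥K → Fin d) :
    ∏ i : ↥I, g (tot K a i) = ∏ i ∈ I, g (tot K a i) := by
  rw [Finset.univ_eq_attach, ← Finset.prod_attach I (fun i => g (tot K a i))]

lemma trace_outer_prodVec (K : Finset (Fin n)) (v : Fin d → ℂ)
    (hv : ∑ x, v x * star (v x) = 1) : (outer (prodVec K v)).trace = 1 := by
  rw [Matrix.trace]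
  simp only [Matrix.diag, outer, Matrix.of_apply, prodVec, star_prod, ← Finset.prod_mul_distrib]
  rw [← Fintype.piFinset_univ,
    Finset.sum_prod_piFinset univ (fun (_ : ↥K) (y : Fin d) => v y * star (v y))]
  rw [Finset.prod_congr rfl fun (_ : ↥K) _ => hv, Finset.prod_const_one]

lemma extP_pure (I K : Finset (Fin n)) (hIK : I ⊆ K) (v : Fin d → ℂ) :
    extP I K (outer (prodVec I v)) v = outer (prodVec K v) := by
  ext a b
  simp only [extP, outer, Matrix.of_apply, prodVec, Finset.prod_mul_distrib, star_prod]
  rw [prod_split_tot I K hIK v a, prod_split_tot I K hIK (fun y => star (v y)) b]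
  rw [show (∏ i : ↥I, v (tot K a i)) = ∏ i ∈ I, v (tot K a i) from prod_subtype_tot I K hIK v a,
    show (∏ i : ↥I, star (v (tot K b i))) = ∏ i ∈ I, star (v (tot K b i)) from
      prod_subtype_tot I K hIK (fun y => star (v y)) b]
  ring

end Aux

section Main
variable {n d : ℕ} [NeZero d]

lemma extP_restrict (I K : Finset (Fin n)) (hIK : I ⊆ K)
    (ρ : Matrix (↥I → Fin d) (↥I → Fin d) ℂ) (v : Fin d → ℂ) (x y : Fin n → Fin d) :
    extP I K ρ v (fun k : ↥K => x k) (fun k : ↥K => y k)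
      = ρ (fun i : ↥I => x i) (fun i : ↥I => y i)
        * ∏ j ∈ K \ I, (v (x j) * star (v (y j))) := by
  rw [extP, Matrix.of_apply]
  congr 1
  · congr 1 <;> (funext i; simp [tot, hIK i.2])
  · refine Finset.prod_congr rfl fun j hj => ?_
    have : tot K (fun k : ↥K => x k) j = x j := by simp [tot, (Finset.mem_sdiff.mp hj).1]
    have h2 : tot K (fun k : ↥K => y k) j = y j := by simp [tot, (Finset.mem_sdiff.mp hj).1]
    rw [this, h2]

lemma embed_smul (K : Finset (Fin n)) (c : ℝ)
    (ρ : Matrix (↥K → Fin d) (↥K → Fin d) ℂ) (Q : Matrix (Fin d) (Fin d) ℂ) :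
    embed K (c • ρ) Q = c • embed K ρ Q := by
  ext x y
  simp only [embed, Matrix.of_apply, Matrix.smul_apply, smul_mul_assoc]

lemma embed_sum {α : Type*} (s : Finset α) (K : Finset (Fin n))
    (f : α → Matrix (↥K → Fin d) (↥K → Fin d) ℂ) (Q : Matrix (Fin d) (Fin d) ℂ) :
    embed K (∑ i ∈ s, f i) Q = ∑ i ∈ s, embed K (f i) Q := by
  ext x y
  simp only [embed, Matrix.of_apply, Matrix.sum_apply, Finset.sum_mul]

lemma embed_expand (I : Finset (Fin n)) (ρ : Matrix (↥I → Fin d) (↥I → Fin d) ℂ)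
    (v : Fin d → ℂ) (ε δ : ℝ) (Q Qt : Matrix (Fin d) (Fin d) ℂ)
    (hQab : ∀ a b, Q a b = (ε : ℂ) * (v a * star (v b)) + (δ : ℂ) * Qt a b) :
    embed I ρ Q = ∑ J ∈ Iᶜ.powerset,
      (ε ^ J.card * δ ^ ((I ∪ J)ᶜ).card) • embed (I ∪ J) (extP I (I ∪ J) ρ v) Qt := by
  ext x y
  rw [Matrix.sum_apply]
  simp only [embed, Matrix.of_apply, Matrix.smul_apply]
  rw [Finset.prod_congr rfl (fun j _ => hQab (x j) (y j)), Finset.prod_add, Finset.mul_sum]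
  refine Finset.sum_congr rfl fun J hJ => ?_
  have hJsub : J ⊆ Iᶜ := Finset.mem_powerset.mp hJ
  have hdisj : Disjoint I J := Finset.disjoint_left.mpr fun a ha haJ =>
    (Finset.mem_compl.mp (hJsub haJ)) ha
  have hIK : I ⊆ I ∪ J := Finset.subset_union_left
  have hun : (I ∪ J) \ I = J := Finset.union_sdiff_cancel_left hdisj
  have hcompl : Iᶜ \ J = (I ∪ J)ᶜ := by
    rw [Finset.compl_union, Finset.sdiff_eq_inter_compl]
  rw [extP_restrict I (I ∪ J) hIK ρ v x y, hun, hcompl]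
  simp only [Finset.prod_mul_distrib, Finset.prod_const]
  rw [Complex.real_smul]
  push_cast
  ring
end Main

section Main2
variable {n d : ℕ} [NeZero d]

lemma sum_powerset_reindex {M : Type*} [AddCommMonoid M]
    (F : Finset (Fin n) → Finset (Fin n) → M) :
    ∑ K : Finset (Fin n), ∑ I ∈ K.powerset, F I K
      = ∑ I : Finset (Fin n), ∑ J ∈ Iᶜ.powerset, F I (I ∪ J) := by
  rw [Finset.sum_sigma' univ (fun K => K.powerset) (fun K I => F I K),
    Finset.sum_sigma' univ (fun I => Iᶜ.powerset) (fun I J => F I (I ∪ J))]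
  refine Finset.sum_nbij' (fun p => ⟨p.2, p.1 \ p.2⟩) (fun p => ⟨p.1 ∪ p.2, p.1⟩) ?_ ?_ ?_ ?_ ?_
  · rintro ⟨K, I⟩ hp
    simp only [Finset.mem_sigma, Finset.mem_univ, Finset.mem_powerset, true_and] at hp ⊢
    intro a ha
    exact Finset.mem_compl.mpr (Finset.mem_sdiff.mp ha).2
  · rintro ⟨I, J⟩ hp
    simp only [Finset.mem_sigma, Finset.mem_univ, Finset.mem_powerset, true_and] at hp ⊢
    exact Finset.subset_union_left
  · rintro ⟨K, I⟩ hp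
    simp only [Finset.mem_sigma, Finset.mem_univ, Finset.mem_powerset, true_and] at hp
    exact Sigma.ext (Finset.union_sdiff_of_subset hp) (by
      simp only [Finset.union_sdiff_of_subset hp]; rfl)
  · rintro ⟨I, J⟩ hp
    simp only [Finset.mem_sigma, Finset.mem_univ, Finset.mem_powerset, true_and] at hp
    have hdisj : Disjoint I J := Finset.disjoint_left.mpr fun a ha haJ =>
      (Finset.mem_compl.mp (hp haJ)) ha
    exact Sigma.ext rfl (by simp only [Finset.union_sdiff_cancel_left hdisj]; rfl)
  · rintro ⟨K, I⟩ hp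
    simp only [Finset.mem_sigma, Finset.mem_univ, Finset.mem_powerset, true_and] at hp
    simp only [Finset.union_sdiff_of_subset hp]

noncomputable def nuM (μ : Finset (Fin n) → ℝ) (ε δ : ℝ) (K : Finset (Fin n)) : ℝ :=
  ∑ I ∈ K.powerset, μ I * (ε ^ (K \ I).card * δ ^ Kᶜ.card)

noncomputable def tauM (μ : Finset (Fin n) → ℝ) (ε δ : ℝ)
    (ρ : (I : Finset (Fin n)) → Matrix (↥I → Fin d) (↥I → Fin d) ℂ) (v : Fin d → ℂ)
    (K : Finset (Fin n)) : Matrix (↥K → Fin d) (↥K → Fin d) ℂ :=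
  ∑ I ∈ K.powerset, (μ I * (ε ^ (K \ I).card * δ ^ Kᶜ.card)) • extP I K (ρ I) v

noncomputable def sigmaM (μ : Finset (Fin n) → ℝ) (ε δ : ℝ)
    (ρ : (I : Finset (Fin n)) → Matrix (↥I → Fin d) (↥I → Fin d) ℂ) (v : Fin d → ℂ)
    (K : Finset (Fin n)) : Matrix (↥K → Fin d) (↥K → Fin d) ℂ :=
  if nuM μ ε δ K = 0 then outer (prodVec K v)
  else (nuM μ ε δ K)⁻¹ • tauM μ ε δ ρ v K

lemma coeff_nonneg {μ : Finset (Fin n) → ℝ} (hμ0 : ∀ I, 0 ≤ μ I) {ε δ : ℝ}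
    (hε : 0 ≤ ε) (hδ : 0 ≤ δ) (I K : Finset (Fin n)) :
    0 ≤ μ I * (ε ^ (K \ I).card * δ ^ Kᶜ.card) :=
  mul_nonneg (hμ0 I) (mul_nonneg (pow_nonneg hε _) (pow_nonneg hδ _))

lemma nuM_nonneg {μ : Finset (Fin n) → ℝ} (hμ0 : ∀ I, 0 ≤ μ I) {ε δ : ℝ}
    (hε : 0 ≤ ε) (hδ : 0 ≤ δ) (K : Finset (Fin n)) : 0 ≤ nuM μ ε δ K :=
  Finset.sum_nonneg fun I _ => coeff_nonneg hμ0 hε hδ I K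

lemma nuM_sum (μ : Finset (Fin n) → ℝ) (hμ1 : ∑ I, μ I = 1) (ε δ : ℝ) (hεδ : ε + δ = 1) :
    ∑ K, nuM μ ε δ K = 1 := by
  unfold nuM
  rw [sum_powerset_reindex (fun I K => μ I * (ε ^ (K \ I).card * δ ^ Kᶜ.card))]
  rw [← hμ1]
  refine Finset.sum_congr rfl fun I _ => ?_
  have : ∀ J ∈ Iᶜ.powerset, μ I * (ε ^ ((I ∪ J) \ I).card * δ ^ ((I ∪ J)ᶜ).card)
      = μ I * (ε ^ J.card * δ ^ (Iᶜ \ J).card) := by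
    intro J hJ
    have hJsub : J ⊆ Iᶜ := Finset.mem_powerset.mp hJ
    have hdisj : Disjoint I J := Finset.disjoint_left.mpr fun a ha haJ =>
      (Finset.mem_compl.mp (hJsub haJ)) ha
    rw [Finset.union_sdiff_cancel_left hdisj, Finset.compl_union,
      ← Finset.sdiff_eq_inter_compl]
  rw [Finset.sum_congr rfl this, ← Finset.mul_sum]
  have : ∑ J ∈ Iᶜ.powerset, ε ^ J.card * δ ^ (Iᶜ \ J).card = 1 := by
    have := Finset.prod_add (fun _ : Fin n => ε) (fun _ => δ) Iᶜ
    simp only [Finset.prod_const, hεδ, Finset.prod_const] at this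
    rw [← this, one_pow]
  rw [this, mul_one]

lemma alignOp_eq (μ : Finset (Fin n) → ℝ) (hμ0 : ∀ I, 0 ≤ μ I)
    (ρ : (I : Finset (Fin n)) → Matrix (↥I → Fin d) (↥I → Fin d) ℂ) (v : Fin d → ℂ)
    (ε δ : ℝ) (hε : 0 ≤ ε) (hδ : 0 ≤ δ) (Q Qt : Matrix (Fin d) (Fin d) ℂ)
    (hQab : ∀ a b, Q a b = (ε : ℂ) * (v a * star (v b)) + (δ : ℂ) * Qt a b) :
    alignOp μ ρ Q = alignOp (nuM μ ε δ) (sigmaM μ ε δ ρ v) Qt := by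
  have step1 : alignOp μ ρ Q = ∑ K : Finset (Fin n), ∑ I ∈ K.powerset,
      (μ I * (ε ^ (K \ I).card * δ ^ Kᶜ.card)) • embed K (extP I K (ρ I) v) Qt := by
    rw [sum_powerset_reindex (fun I K =>
      (μ I * (ε ^ (K \ I).card * δ ^ Kᶜ.card)) • embed K (extP I K (ρ I) v) Qt)]
    unfold alignOp
    refine Finset.sum_congr rfl fun I _ => ?_
    rw [embed_expand I (ρ I) v ε δ Q Qt hQab, Finset.smul_sum]
    refine Finset.sum_congr rfl fun J hJ => ?_
    have hJsub : J ⊆ Iᶜ := Finset.mem_powerset.mp hJ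
    have hdisj : Disjoint I J := Finset.disjoint_left.mpr fun a ha haJ =>
      (Finset.mem_compl.mp (hJsub haJ)) ha
    rw [smul_smul, Finset.union_sdiff_cancel_left hdisj]
  rw [step1]
  unfold alignOp
  refine Finset.sum_congr rfl fun K _ => ?_
  by_cases h0 : nuM μ ε δ K = 0
  · have hall : ∀ I ∈ K.powerset, μ I * (ε ^ (K \ I).card * δ ^ Kᶜ.card) = 0 := by
      have := (Finset.sum_eq_zero_iff_of_nonneg
        (fun I _ => coeff_nonneg hμ0 hε hδ I K)).mp h0
      exact this
    rw [h0, zero_smul]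
    exact Finset.sum_eq_zero fun I hI => by rw [hall I hI, zero_smul]
  · rw [sigmaM, if_neg h0, embed_smul, smul_smul, mul_inv_cancel₀ h0, one_smul,
      tauM, embed_sum]
    refine Finset.sum_congr rfl fun I hI => ?_
    rw [embed_smul]

lemma sigmaM_pure (μ : Finset (Fin n) → ℝ) (ε δ : ℝ) (v : Fin d → ℂ) (K : Finset (Fin n)) :
    sigmaM μ ε δ (fun I => outer (prodVec I v)) v K = outer (prodVec K v) := by
  rw [sigmaM]
  by_cases h0 : nuM μ ε δ K = 0
  · rw [if_pos h0]
  · rw [if_neg h0]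
    have : tauM μ ε δ (fun I => outer (prodVec I v)) v K = nuM μ ε δ K • outer (prodVec K v) := by
      rw [tauM, nuM, Finset.sum_smul]
      refine Finset.sum_congr rfl fun I hI => ?_
      rw [extP_pure I K (Finset.mem_powerset.mp hI) v]
    rw [this, smul_smul, inv_mul_cancel₀ h0, one_smul]

lemma sigmaM_isState (μ : Finset (Fin n) → ℝ) (hμ0 : ∀ I, 0 ≤ μ I) (ε δ : ℝ)
    (hε : 0 ≤ ε) (hδ : 0 ≤ δ)
    (ρ : (I : Finset (Fin n)) → Matrix (↥I → Fin d) (↥I → Fin d) ℂ)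
    (hρ : ∀ I, IsState (ρ I)) (v : Fin d → ℂ) (hv : ∑ x, v x * star (v x) = 1)
    (K : Finset (Fin n)) : IsState (sigmaM μ ε δ ρ v K) := by
  rw [sigmaM]
  by_cases h0 : nuM μ ε δ K = 0
  · rw [if_pos h0]
    exact ⟨posSemidef_outer _, trace_outer_prodVec K v hv⟩
  · rw [if_neg h0]
    have hτpsd : (tauM μ ε δ ρ v K).PosSemidef := by
      refine posSemidef_sum _ _ fun I hI => ?_
      exact posSemidef_smul_real
        (posSemidef_extP I K (Finset.mem_powerset.mp hI) (ρ I) (hρ I).1 v)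
        (coeff_nonneg hμ0 hε hδ I K)
    constructor
    · exact posSemidef_smul_real hτpsd
        (inv_nonneg.mpr (nuM_nonneg hμ0 hε hδ K))
    · have hτtr : (tauM μ ε δ ρ v K).trace = ((nuM μ ε δ K : ℝ) : ℂ) := by
        rw [tauM, Matrix.trace_sum]
        rw [nuM]
        push_cast
        refine Finset.sum_congr rfl fun I hI => ?_
        rw [Matrix.trace_smul, trace_extP I K (Finset.mem_powerset.mp hI) (ρ I) v hv,
          (hρ I).2, Complex.real_smul]
        push_cast
        ring
      rw [Matrix.trace_smul, hτtr, Complex.real_smul, ← Complex.ofReal_mul,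
        inv_mul_cancel₀ h0, Complex.ofReal_one]

end Main2

/-- reduction to a flatter spectrum. If the spin alignment problem for
`Q̃` (obtained by flattening the top two eigenvalues of `Q`) is maximized at
`(|q₁⟩⟨q₁|^{⊗I})_I` for all probability measures `μ̃`, then so is the problem for `Q`. -/
theorem reduction_to_flatter_spectrum {n d : ℕ} [NeZero d] (hd : 2 ≤ d)
    (f : Matrix (Fin n → Fin d) (Fin n → Fin d) ℂ → ℝ)
    (hconv : ConvexOn ℝ Set.univ f) (hcont : Continuous f)
    (hui : ∀ U ∈ Matrix.unitaryGroup (Fin n → Fin d) ℂ,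
      ∀ M, f (U * M * star U) = f M)
    (q : Fin d → Fin d → ℂ) (hq : OrthonormalFam q)
    (lam : Fin d → ℝ) (hlam : Antitone lam) (hlam0 : ∀ i, 0 ≤ lam i)
    (hlam1 : ∑ i, lam i = 1)
    (hrank2 : 0 < lam 1)  -- `Q` has rank at least 2
    (Q : Matrix (Fin d) (Fin d) ℂ) (hQ : Q = ∑ i, (lam i : ℂ) • outer (q i))
    (Qt : Matrix (Fin d) (Fin d) ℂ)
    (hQt : Qt = (1 - (lam 0 - lam 1))⁻¹ •
      ∑ i : Fin d, (((if i.val ≤ 1 then lam 1 else lam i) : ℝ) : ℂ) • outer (q i))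
    (hopt : ∀ μt : Finset (Fin n) → ℝ, (∀ I, 0 ≤ μt I) → ∑ I, μt I = 1 →
      ∀ ρ : (I : Finset (Fin n)) → Matrix (↥I → Fin d) (↥I → Fin d) ℂ,
        (∀ I, IsState (ρ I)) →
        f (alignOp μt ρ Qt) ≤ f (alignOp μt (fun I => outer (prodVec I (q 0))) Qt))
    (μ : Finset (Fin n) → ℝ) (hμ0 : ∀ I, 0 ≤ μ I) (hμ1 : ∑ I, μ I = 1)
    (ρ : (I : Finset (Fin n)) → Matrix (↥I → Fin d) (↥I → Fin d) ℂ)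
    (hρ : ∀ I, IsState (ρ I)) :
    f (alignOp μ ρ Q) ≤ f (alignOp μ (fun I => outer (prodVec I (q 0))) Q) := by
  set ε : ℝ := lam 0 - lam 1 with hε_def
  set δ : ℝ := 1 - ε with hδ_def
  have hone : ((1 : Fin d) : ℕ) = 1 := by
    have : ((1 : Fin d) : ℕ) = 1 % d := rfl
    rw [this, Nat.mod_eq_of_lt (by omega)]
  have hzero : ((0 : Fin d) : ℕ) = 0 := rfl
  have hε : 0 ≤ ε := by
    have : lam 1 ≤ lam 0 := hlam (by rw [Fin.le_def, hone, hzero]; omega)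
    simp only [hε_def]; linarith
  have hlam0le : lam 0 ≤ 1 := by
    rw [← hlam1]
    exact Finset.single_le_sum (fun i _ => hlam0 i) (Finset.mem_univ 0)
  have hδpos : 0 < δ := by simp only [hδ_def, hε_def]; linarith
  have hδ : 0 ≤ δ := le_of_lt hδpos
  have hεδ : ε + δ = 1 := by simp only [hδ_def]; ring
  have hv : ∑ x, q 0 x * star (q 0 x) = 1 := by
    have := hq 0 0
    rw [if_pos rfl] at this
    rw [← this]
    exact Finset.sum_congr rfl fun k _ => mul_comm _ _
  have hQab : ∀ a b, Q a b = (ε : ℂ) * (q 0 a * star (q 0 b)) + (δ : ℂ) * Qt a b := by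
    intro a b
    have hQ2 : Q a b = ∑ i, (lam i : ℂ) * (q i a * star (q i b)) := by
      rw [hQ]
      simp [Matrix.sum_apply, outer]
    have hQt2 : (δ : ℂ) * Qt a b
        = ∑ i, (((if i.val ≤ 1 then lam 1 else lam i) : ℝ) : ℂ) * (q i a * star (q i b)) := by
      rw [hQt]
      simp only [Matrix.smul_apply, Matrix.sum_apply, outer, Matrix.of_apply, smul_eq_mul]
      rw [Complex.real_smul, ← mul_assoc, ← Complex.ofReal_mul,
        mul_inv_cancel₀ (ne_of_gt hδpos), Complex.ofReal_one, one_mul]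
    rw [hQ2, hQt2]
    have key : ∀ i : Fin d, (lam i : ℂ) * (q i a * star (q i b))
        = (if i = 0 then (ε : ℂ) * (q 0 a * star (q 0 b)) else 0)
          + (((if i.val ≤ 1 then lam 1 else lam i) : ℝ) : ℂ) * (q i a * star (q i b)) := by
      intro i
      by_cases hi : i = 0
      · subst hi
        rw [if_pos rfl, if_pos (by rw [hzero]; omega)]
        push_cast [hε_def]
        ring
      · rw [if_neg hi, zero_add]
        by_cases hle : i.val ≤ 1
        · have hv1 : i.val = 1 := by
            have : i.val ≠ 0 := fun h => hi (Fin.ext (by rw [h, hzero]))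
            omega
          have hi1 : i = 1 := Fin.ext (by rw [hv1, hone])
          rw [if_pos hle, hi1]
        · rw [if_neg hle]
    rw [Finset.sum_congr rfl fun i _ => key i, Finset.sum_add_distrib,
      Finset.sum_ite_eq' univ (0 : Fin d) (fun _ => (ε : ℂ) * (q 0 a * star (q 0 b)))]
    simp
  have h1 : alignOp μ ρ Q = alignOp (nuM μ ε δ) (sigmaM μ ε δ ρ (q 0)) Qt :=
    alignOp_eq μ hμ0 ρ (q 0) ε δ hε hδ Q Qt hQab
  have h2 : alignOp μ (fun I => outer (prodVec I (q 0))) Q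
      = alignOp (nuM μ ε δ) (fun K => outer (prodVec K (q 0))) Qt := by
    rw [alignOp_eq μ hμ0 (fun I => outer (prodVec I (q 0))) (q 0) ε δ hε hδ Q Qt hQab]
    unfold alignOp
    exact Finset.sum_congr rfl fun K _ => by rw [sigmaM_pure]
  rw [h1, h2]
  exact hopt (nuM μ ε δ) (nuM_nonneg hμ0 hε hδ) (nuM_sum μ hμ1 ε δ hεδ)
    (sigmaM μ ε δ ρ (q 0))
    (fun K => sigmaM_isState μ hμ0 ε δ hε hδ ρ hρ (q 0) hv K)
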